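/- Let z_0,...,z_m be pairwise distinct complex numbers and w_0,...,w_m nonzero complex numbers, and let r_j(z) = (w_j/(z - z_j)) / (∑_{i=0}^m w_i/(z - z_i)). Define the (m+1)×m lower bidiagonal matrix W with entries W_{j,j} = -w_{j+1} and W_{j+1,j} = w_j (indices 0-based, columns j = 0,...,m-1), and the diagonal matrix Z = diag(z_0,...,z_m). Then for every z where all r_j are defined, the row vector identity z · [r_0(z),...,r_m(z)] · W = [r_0(z),...,r_m(z)] · (Z W) holds. -/

import Mathlib

open Finset Matrix

/-- The `(m+1) × m` lower-bidiagonal barycentric weight matrix: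
`W j j = -w (j+1)` and `W (j+1) j = w j`. -/
def baryW (m : ℕ) (w : Fin (m + 1) → ℂ) : Matrix (Fin (m + 1)) (Fin m) ℂ :=
  Matrix.of fun i j =>
    if i = j.castSucc then -w j.succ else if i = j.succ then w j.castSucc else 0

/-- the rational Arnoldi decomposition
`z · [r_0,...,r_m] W = [r_0,...,r_m] (Z W)` for the barycentric basis. -/
theorem bary_rational_arnoldi (m : ℕ) (z w : Fin (m + 1) → ℂ)
    (hz : Function.Injective z) (hw : ∀ j, w j ≠ 0) (ζ : ℂ)
    (hζ : ∀ i, ζ ≠ z i) (hd : (∑ i, w i / (ζ - z i)) ≠ 0) :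
    ζ • Matrix.vecMul (fun i => (w i / (ζ - z i)) / (∑ i', w i' / (ζ - z i')))
        (baryW m w) =
      Matrix.vecMul (fun i => (w i / (ζ - z i)) / (∑ i', w i' / (ζ - z i')))
        (Matrix.diagonal z * baryW m w) := by
  set S := ∑ i', w i' / (ζ - z i') with hS
  funext j
  simp only [Matrix.vecMul, dotProduct, Pi.smul_apply, smul_eq_mul,
    Matrix.diagonal_mul, Finset.mul_sum]
  rw [← sub_eq_zero, ← Finset.sum_sub_distrib]
  have hne : (j.castSucc : Fin (m + 1)) ≠ j.succ := (Fin.castSucc_lt_succ (i := j)).ne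
  have key : ∀ i : Fin (m + 1),
      ζ * (w i / (ζ - z i) / S * baryW m w i j)
        - w i / (ζ - z i) / S * (z i * baryW m w i j)
      = (if i = j.castSucc then w i / S * (-w j.succ) else 0)
        + (if i = j.succ then w i / S * (w j.castSucc) else 0) := by
    intro i
    have hzi : ζ - z i ≠ 0 := sub_ne_zero.mpr (hζ i)
    have hr : ζ * (w i / (ζ - z i) / S) - w i / (ζ - z i) / S * z i = w i / S := by
      field_simp
    have expand : ζ * (w i / (ζ - z i) / S * baryW m w i j)
        - w i / (ζ - z i) / S * (z i * baryW m w i j)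
        = (ζ * (w i / (ζ - z i) / S) - w i / (ζ - z i) / S * z i) * baryW m w i j := by
      ring
    rw [expand, hr]
    simp only [baryW, Matrix.of_apply]
    rcases eq_or_ne i j.castSucc with h1 | h1
    · simp [h1, hne]
    · rcases eq_or_ne i j.succ with h2 | h2
      · simp [h1, h2, hne.symm]
      · simp [h1, h2, hne.symm]
  rw [Finset.sum_congr rfl fun i _ => key i, Finset.sum_add_distrib,
    Finset.sum_ite_eq' Finset.univ j.castSucc (fun i => w i / S * (-w j.succ)),
    Finset.sum_ite_eq' Finset.univ j.succ (fun i => w i / S * (w j.castSucc))]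
  simp only [Finset.mem_univ, if_true]
  ring
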